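/- Let G=(V,E) be a finite connected weighted graph, λ ≠ 0, and f : V → ℝ with c₁ := −(1/λ)∫_V f dμ ≠ 0. If u solves Δu = λe^u(e^u − 1) + f on V, then max_V u > ln min{1, |c₁|/(4|V|)}. Consequently (combining with the upper bound and the elliptic estimate), there is a constant C > 0 depending only on λ, ‖f‖_∞, ∫_V f dμ, and the graph, such that ‖u‖_∞ ≤ C. -/

import Mathlib

open Real Finset Filter Topology

variable {V : Type*}

/-- Graph Laplacian: Δu(x) = (1/μ x) Σ_y ω_{xy}(u(y) − u(x)); non-edges have weight 0. -/
noncomputable def glap [Fintype V] (μ : V → ℝ) (w : V → V → ℝ) (u : V → ℝ) (x : V) : ℝ :=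
  (1 / μ x) * ∑ y, w x y * (u y - u x)

/-- Integral over the graph: ∫_V g dμ = Σ_x μ(x) g(x). -/
noncomputable def intg [Fintype V] (μ : V → ℝ) (g : V → ℝ) : ℝ := ∑ x, μ x * g x

/-- Dirichlet energy ∫_V |∇u|² dμ = (1/2) Σ_x Σ_y ω_{xy}(u(y) − u(x))². -/
noncomputable def gradSq [Fintype V] (w : V → V → ℝ) (u : V → ℝ) : ℝ :=
  (1/2) * ∑ x, ∑ y, w x y * (u y - u x)^2

/-- Connectivity: any two vertices are joined by a finite chain of positive-weight edges. -/
def GConn (w : V → V → ℝ) : Prop :=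
  ∀ x y : V, Relation.ReflTransGen (fun a b => 0 < w a b) x y

/-- Sup norm ‖u‖_∞. -/
noncomputable def supnorm [Fintype V] (u : V → ℝ) : ℝ := ⨆ x, |u x|

private lemma g_lb (t : ℝ) : -(1/4) ≤ Real.exp t * (Real.exp t - 1) := by
  nlinarith [sq_nonneg (Real.exp t - 1/2)]

private lemma g_ge (t : ℝ) : t - 1 ≤ Real.exp t * (Real.exp t - 1) := by
  rcases le_or_gt t 0 with h | h
  · nlinarith [sq_nonneg (Real.exp t - 1/2)]
  · nlinarith [Real.add_one_le_exp t, Real.exp_pos t, sq_nonneg (Real.exp t - 1)]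

private lemma sum_glap_eq_zero [Fintype V] (μ : V → ℝ) (w : V → V → ℝ)
    (hμ : ∀ x, 0 < μ x) (hsymm : ∀ x y, w x y = w y x) (u : V → ℝ) :
    ∑ x, μ x * glap μ w u x = 0 := by
  have h1 : ∑ x, μ x * glap μ w u x = ∑ x, ∑ y, w x y * (u y - u x) := by
    refine Finset.sum_congr rfl fun x _ => ?_
    have hx : μ x ≠ 0 := (hμ x).ne'
    rw [glap]; field_simp
  rw [h1]
  have h2 : ∑ x : V, ∑ y : V, w x y * (u y - u x)
      = ∑ x : V, ∑ y : V, (-(w x y * (u y - u x))) := by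
    rw [Finset.sum_comm]
    refine Finset.sum_congr rfl fun a _ => Finset.sum_congr rfl fun b _ => ?_
    rw [hsymm b a]; ring
  have h3 : ∑ x : V, ∑ y : V, (-(w x y * (u y - u x)))
      = -∑ x : V, ∑ y : V, w x y * (u y - u x) := by
    simp [Finset.sum_neg_distrib]
  have h4 := h2.trans h3
  linarith

set_option maxHeartbeats 1000000 in
/-- Lower bound on max u and a priori bound in sup norm, when c₁ = −(1/λ)∫f dμ ≠ 0. -/
theorem stmt9 [Fintype V] [Nonempty V] (μ : V → ℝ) (w : V → V → ℝ)
    (hμ : ∀ x, 0 < μ x) (hsymm : ∀ x y, w x y = w y x) (hnn : ∀ x y, 0 ≤ w x y)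
    (hconn : GConn w) (l : ℝ) (hl : l ≠ 0) (f : V → ℝ)
    (hc : -(1 / l) * intg μ f ≠ 0) :
    (∀ u : V → ℝ,
      (∀ x, glap μ w u x = l * Real.exp (u x) * (Real.exp (u x) - 1) + f x) →
      Real.log (min 1 (|-(1 / l) * intg μ f| / (4 * ∑ x, μ x))) < ⨆ x, u x) ∧
    ∃ C : ℝ, 0 < C ∧ ∀ u : V → ℝ,
      (∀ x, glap μ w u x = l * Real.exp (u x) * (Real.exp (u x) - 1) + f x) →
      supnorm u ≤ C := by
  classical
  set S := ∑ x, μ x with hSdef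
  have hSpos : 0 < S := Finset.sum_pos (fun x _ => hμ x) Finset.univ_nonempty
  set c := -(1 / l) * intg μ f with hcdef
  set m := min 1 (|c| / (4 * S)) with hmdef
  have hmpos : 0 < m := lt_min one_pos (div_pos (abs_pos.2 hc) (by positivity))
  have hm1 : m ≤ 1 := min_le_left _ _
  -- integral identity
  have hint : ∀ u : V → ℝ,
      (∀ x, glap μ w u x = l * Real.exp (u x) * (Real.exp (u x) - 1) + f x) →
      ∑ x, μ x * (Real.exp (u x) * (Real.exp (u x) - 1)) = c := by
    intro u hu
    have h0 := sum_glap_eq_zero μ w hμ hsymm u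
    have h1 : ∑ x, μ x * glap μ w u x
        = l * ∑ x, μ x * (Real.exp (u x) * (Real.exp (u x) - 1)) + intg μ f := by
      simp_rw [hu]
      rw [intg, Finset.mul_sum, ← Finset.sum_add_distrib]
      exact Finset.sum_congr rfl fun x _ => by ring
    rw [h0] at h1
    rw [hcdef]
    field_simp
    have e : ∑ x, μ x * Real.exp (u x) * (Real.exp (u x) - 1) = ∑ x, μ x * (Real.exp (u x) * (Real.exp (u x) - 1)) :=
      Finset.sum_congr rfl fun x _ => by ring
    rw [e]
    linarith
  -- Part 1
  have part1 : ∀ u : V → ℝ,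
      (∀ x, glap μ w u x = l * Real.exp (u x) * (Real.exp (u x) - 1) + f x) →
      Real.log m < ⨆ x, u x := by
    intro u hu
    by_contra hcon
    push_neg at hcon
    have hub : ∀ x, u x ≤ Real.log m := fun x =>
      le_trans (le_ciSup (Finite.bddAbove_range u) x) hcon
    have habs : ∀ x, |Real.exp (u x) * (Real.exp (u x) - 1)| ≤ m := by
      intro x
      have he : Real.exp (u x) ≤ m := by
        calc Real.exp (u x) ≤ Real.exp (Real.log m) := Real.exp_le_exp.2 (hub x)
          _ = m := Real.exp_log hmpos
      have hep := Real.exp_pos (u x)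
      rw [abs_le]
      constructor <;> nlinarith
    have hGc := hint u hu
    have hcS : |c| ≤ S * m := by
      rw [← hGc]
      calc |∑ x, μ x * (Real.exp (u x) * (Real.exp (u x) - 1))|
          ≤ ∑ x, |μ x * (Real.exp (u x) * (Real.exp (u x) - 1))| :=
            Finset.abs_sum_le_sum_abs _ _
        _ ≤ ∑ x, μ x * m := Finset.sum_le_sum fun x _ => by
            rw [abs_mul, abs_of_pos (hμ x)]
            exact mul_le_mul_of_nonneg_left (habs x) (hμ x).le
        _ = S * m := by rw [← Finset.sum_mul]
    have hm2 : m ≤ |c| / (4 * S) := min_le_right _ _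
    have hq : |c| ≤ |c| / 4 := by
      calc |c| ≤ S * m := hcS
        _ ≤ S * (|c| / (4 * S)) := mul_le_mul_of_nonneg_left hm2 hSpos.le
        _ = |c| / 4 := by field_simp
    have := abs_pos.2 hc
    linarith
  refine ⟨part1, ?_⟩
  -- minimum of μ
  obtain ⟨x0, _, hx0min⟩ := Finset.exists_min_image Finset.univ μ Finset.univ_nonempty
  set μ0 := μ x0 with hμ0def
  have hμ0 : 0 < μ0 := hμ x0
  have hμ0le : ∀ x, μ0 ≤ μ x := fun x => hx0min x (Finset.mem_univ x)
  set Q := |c| + S / 4 with hQdef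
  have hQpos : 0 < Q := by
    have := abs_pos.2 hc
    have := hSpos
    rw [hQdef]; linarith
  set M := Q / μ0 + 1 with hMdef
  -- uniform upper bound
  have hMub : ∀ u : V → ℝ,
      (∀ x, glap μ w u x = l * Real.exp (u x) * (Real.exp (u x) - 1) + f x) →
      ∀ x, u x ≤ M := by
    intro u hu x
    have hGc := hint u hu
    have h1 : μ x * (Real.exp (u x) * (Real.exp (u x) - 1) + 1/4)
        ≤ ∑ z, μ z * (Real.exp (u z) * (Real.exp (u z) - 1) + 1/4) :=
      Finset.single_le_sum
        (f := fun z => μ z * (Real.exp (u z) * (Real.exp (u z) - 1) + 1/4))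
        (fun z _ => mul_nonneg (hμ z).le (by linarith [g_lb (u z)])) (Finset.mem_univ x)
    have h2 : ∑ z, μ z * (Real.exp (u z) * (Real.exp (u z) - 1) + 1/4) = c + S / 4 := by
      simp_rw [mul_add]
      rw [Finset.sum_add_distrib, hGc]
      congr 1
      rw [hSdef, Finset.sum_div]
      exact Finset.sum_congr rfl fun z _ => by ring
    have h3 : μ x * (Real.exp (u x) * (Real.exp (u x) - 1) + 1/4) ≤ Q := by
      have : c ≤ |c| := le_abs_self c
      rw [hQdef]; linarith
    have htn : 0 ≤ Real.exp (u x) * (Real.exp (u x) - 1) + 1/4 := by nlinarith [g_lb (u x)]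
    have h4 : μ0 * (Real.exp (u x) * (Real.exp (u x) - 1) + 1/4) ≤ Q :=
      le_trans (mul_le_mul_of_nonneg_right (hμ0le x) htn) h3
    have h5 : Real.exp (u x) * (Real.exp (u x) - 1) + 1/4 ≤ Q / μ0 := by
      rw [le_div_iff₀ hμ0]; linarith
    have h6 := g_ge (u x)
    rw [hMdef]; linarith
  -- sup of |f|
  obtain ⟨xf, _, hxf⟩ := Finset.exists_max_image Finset.univ (fun x => |f x|)
    Finset.univ_nonempty
  set F0 := |f xf| with hF0def
  have hF : ∀ x, |f x| ≤ F0 := fun x => hxf x (Finset.mem_univ x)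
  have hF0nn : 0 ≤ F0 := le_trans (abs_nonneg _) (hF (Classical.arbitrary V))
  set A := |l| * ((Real.exp M)^2 + Real.exp M) + F0 with hAdef
  have hAnn : 0 ≤ A := by positivity
  -- pointwise laplacian lower bound for solutions
  have hlap_lb : ∀ u : V → ℝ,
      (∀ x, glap μ w u x = l * Real.exp (u x) * (Real.exp (u x) - 1) + f x) →
      ∀ x, -A ≤ glap μ w u x := by
    intro u hu x
    have hub := hMub u hu
    have h1 : Real.exp (u x) ≤ Real.exp M := Real.exp_le_exp.2 (hub x)
    have h2 := Real.exp_pos (u x)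
    have hsq : Real.exp (u x) * Real.exp (u x) ≤ Real.exp M * Real.exp M :=
      mul_le_mul h1 h1 h2.le (Real.exp_pos M).le
    have habs : |Real.exp (u x) * (Real.exp (u x) - 1)| ≤ (Real.exp M)^2 + Real.exp M := by
      rw [abs_le]
      constructor <;> nlinarith [Real.exp_pos M]
    have hg : -(|l| * ((Real.exp M)^2 + Real.exp M)) ≤ l * Real.exp (u x) * (Real.exp (u x) - 1) := by
      have := neg_abs_le (l * Real.exp (u x) * (Real.exp (u x) - 1))
      have heq : |l * Real.exp (u x) * (Real.exp (u x) - 1)|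
          = |l| * |Real.exp (u x) * (Real.exp (u x) - 1)| := by
        rw [mul_assoc, abs_mul]
      have h5 : |l * Real.exp (u x) * (Real.exp (u x) - 1)|
          ≤ |l| * ((Real.exp M)^2 + Real.exp M) := by
        rw [heq]
        exact mul_le_mul_of_nonneg_left habs (abs_nonneg l)
      linarith
    have hfx : -F0 ≤ f x := by
      have := neg_abs_le (f x)
      have := hF x
      linarith
    rw [hu x, hAdef]
    linarith
  -- edge step
  have step : ∀ a b : V, 0 < w a b → ∃ K B : ℝ, 0 ≤ K ∧ 0 ≤ B ∧
      ∀ u : V → ℝ,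
        (∀ x, glap μ w u x = l * Real.exp (u x) * (Real.exp (u x) - 1) + f x) →
        M - u b ≤ K * (M - u a) + B := by
    intro a b hwab
    have hW : 0 ≤ ∑ z, w a z := Finset.sum_nonneg fun z _ => hnn a z
    refine ⟨1 + (∑ z, w a z) / w a b, μ a * A / w a b,
      add_nonneg zero_le_one (div_nonneg hW hwab.le),
      div_nonneg (mul_nonneg (hμ a).le hAnn) hwab.le, ?_⟩
    intro u hu
    have hub := hMub u hu
    have hA := hlap_lb u hu a
    have hμa : μ a ≠ 0 := (hμ a).ne'
    have hsum : ∑ z, w a z * (u z - u a) = μ a * glap μ w u a := by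
      rw [glap]; field_simp
    have hsplit : w a b * (u b - u a)
        = (∑ z, w a z * (u z - u a)) - ∑ z ∈ Finset.univ.erase b, w a z * (u z - u a) := by
      rw [← Finset.sum_erase_add Finset.univ _ (Finset.mem_univ b)]; ring
    have hbound : ∑ z ∈ Finset.univ.erase b, w a z * (u z - u a)
        ≤ (∑ z, w a z) * (M - u a) := by
      calc ∑ z ∈ Finset.univ.erase b, w a z * (u z - u a)
          ≤ ∑ z ∈ Finset.univ.erase b, w a z * (M - u a) :=
            Finset.sum_le_sum fun z _ =>
              mul_le_mul_of_nonneg_left (by linarith [hub z]) (hnn a z)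
        _ ≤ ∑ z, w a z * (M - u a) :=
            Finset.sum_le_sum_of_subset_of_nonneg (Finset.erase_subset _ _)
              (fun z _ _ => mul_nonneg (hnn a z) (by linarith [hub a]))
        _ = (∑ z, w a z) * (M - u a) := (Finset.sum_mul _ _ _).symm
    have h5 : -(μ a * A) - (∑ z, w a z) * (M - u a) ≤ w a b * (u b - u a) := by
      rw [hsplit, hsum]
      have h6 : μ a * (-A) ≤ μ a * glap μ w u a :=
        mul_le_mul_of_nonneg_left hA (hμ a).le
      have h7 : μ a * (-A) = -(μ a * A) := by ring
      linarith
    have key : w a b * (M - u b)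
        ≤ w a b * ((1 + (∑ z, w a z) / w a b) * (M - u a) + μ a * A / w a b) := by
      have hexp : w a b * ((1 + (∑ z, w a z) / w a b) * (M - u a) + μ a * A / w a b)
          = w a b * (M - u a) + (∑ z, w a z) * (M - u a) + μ a * A := by
        field_simp
      have hid : w a b * (M - u b) = w a b * (M - u a) - w a b * (u b - u a) := by ring
      rw [hexp, hid]
      linarith
    exact le_of_mul_le_mul_left key hwab
  -- chain along connectivity
  have chain : ∀ a b : V, ∃ K B : ℝ, 0 ≤ K ∧ 0 ≤ B ∧
      ∀ u : V → ℝ,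
        (∀ x, glap μ w u x = l * Real.exp (u x) * (Real.exp (u x) - 1) + f x) →
        M - u b ≤ K * (M - u a) + B := by
    intro a b
    have h := hconn a b
    induction h with
    | refl => exact ⟨1, 0, zero_le_one, le_refl 0, fun u _ => by linarith⟩
    | @tail p q hap hpq ih =>
      obtain ⟨K, B, hK, hB, hKB⟩ := ih
      obtain ⟨K', B', hK', hB', hK'B'⟩ := step p q hpq
      refine ⟨K' * K, K' * B + B', by positivity, by positivity, ?_⟩
      intro u hu
      have h1 := hKB u hu
      have h2 := hK'B' u hu
      have h3 : K' * (M - u p) ≤ K' * (K * (M - u a) + B) :=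
        mul_le_mul_of_nonneg_left h1 hK'
      nlinarith
  choose K B hK hB hKB using chain
  -- global constants
  obtain ⟨pK, _, hpK⟩ := Finset.exists_max_image (Finset.univ ×ˢ Finset.univ)
    (fun p : V × V => K p.1 p.2) (Finset.univ_nonempty.product Finset.univ_nonempty)
  obtain ⟨pB, _, hpB⟩ := Finset.exists_max_image (Finset.univ ×ˢ Finset.univ)
    (fun p : V × V => B p.1 p.2) (Finset.univ_nonempty.product Finset.univ_nonempty)
  set K0 := K pK.1 pK.2 with hK0def
  set B0 := B pB.1 pB.2 with hB0def
  have hK0le : ∀ a b : V, K a b ≤ K0 := fun a b =>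
    hpK (a, b) (by simp)
  have hB0le : ∀ a b : V, B a b ≤ B0 := fun a b =>
    hpB (a, b) (by simp)
  have hK0nn : 0 ≤ K0 := by
    have a := Classical.arbitrary V
    exact le_trans (hK a a) (hK0le a a)
  have hB0nn : 0 ≤ B0 := by
    have a := Classical.arbitrary V
    exact le_trans (hB a a) (hB0le a a)
  set E := max 0 (M - Real.log m) with hEdef
  have hEnn : 0 ≤ E := le_max_left _ _
  refine ⟨1 + |M| + K0 * E + B0, by positivity, ?_⟩
  intro u hu
  have hub := hMub u hu
  have h1 := part1 u hu
  obtain ⟨z0, hz0⟩ : ∃ z0, u z0 = ⨆ x, u x := exists_eq_ciSup_of_finite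
  have hz0' : Real.log m < u z0 := by rw [hz0]; exact h1
  have hbd : ∀ y, |u y| ≤ 1 + |M| + K0 * E + B0 := by
    intro y
    have h2 := hKB z0 y u hu
    have h3 : M - u z0 ≤ E := le_max_of_le_right (by linarith)
    have h4 : K z0 y * (M - u z0) ≤ K0 * E :=
      mul_le_mul (hK0le z0 y) h3 (by linarith [hub z0]) hK0nn
    have h5 : M - u y ≤ K0 * E + B0 := by linarith [hB0le z0 y]
    have hMa := le_abs_self M
    have hMa' := neg_abs_le M
    rw [abs_le]
    constructor
    · linarith [hub y]
    · linarith [hub y]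
  rw [supnorm]
  exact ciSup_le hbd
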